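/- (van Dalen) Let 𝒮 = {S₁, S₂} be a set of two distinct lattice lines in ℝ², and let F₁, F₂ ⊆ ℤ² be finite sets with |F₁| = |F₂|. Suppose F₁ is uniquely determined among finite subsets of ℤ² by its two X-rays parallel to S₁ and S₂, and set β = Δ_𝒮(F₁, F₂). Then 4|F₁ ∩ F₂| + (β + 2)·(β − 1 + √(8|F₁ ∩ F₂| + (β − 1)²)) ≥ 4|F₁|. -/

import Mathlib

open Set

variable {d : ℕ}

/-- The affine line through the coset `T` of the modulo-`S` quotient, i.e. an affine
line parallel to `S` when `S` is 1-dimensional. -/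
def fiber (S : Submodule ℝ (Fin d → ℝ)) (T : (Fin d → ℝ) ⧸ S) : Set (Fin d → ℝ) :=
  {x | (Submodule.Quotient.mk x : (Fin d → ℝ) ⧸ S) = T}

/-- `F₁` and `F₂` have the same (discrete) X-ray parallel to `S`. -/
def XrayEq (S : Submodule ℝ (Fin d → ℝ)) (F₁ F₂ : Set (Fin d → ℝ)) : Prop :=
  ∀ T : (Fin d → ℝ) ⧸ S, (F₁ ∩ fiber S T).ncard = (F₂ ∩ fiber S T).ncard

/-- `F₁` and `F₂` are tomographically equivalent w.r.t. the family `𝒮` of lines. -/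
def TomEq (𝒮 : Set (Submodule ℝ (Fin d → ℝ))) (F₁ F₂ : Set (Fin d → ℝ)) : Prop :=
  ∀ S ∈ 𝒮, XrayEq S F₁ F₂

/-- A lattice line: a line through the origin spanned by a nonzero integer vector. -/
def IsLatticeLine (S : Submodule ℝ (Fin d → ℝ)) : Prop :=
  ∃ v : Fin d → ℤ, v ≠ 0 ∧ S = Submodule.span ℝ {fun i => (v i : ℝ)}

/-- The canonical embedding of `ℤ^d` into `ℝ^d`. -/
def embed (x : Fin d → ℤ) : Fin d → ℝ := fun i => (x i : ℝ)

/-- The X-ray difference `Δ_𝒮(F₁,F₂)`. -/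
noncomputable def xrayDiff (𝒮 : Set (Submodule ℝ (Fin d → ℝ))) (F₁ F₂ : Set (Fin d → ℝ)) : ℕ :=
  ∑ᶠ S ∈ 𝒮, ∑ᶠ T : (Fin d → ℝ) ⧸ S,
    (((F₁ ∩ fiber S T).ncard : ℤ) - ((F₂ ∩ fiber S T).ncard : ℤ)).natAbs

/-- A convex lattice set: `F = conv(F) ∩ ℤ^d`. -/
def IsConvexLatticeSet (F : Finset (Fin d → ℤ)) : Prop :=
  embed '' ↑F = convexHull ℝ (embed '' ↑F) ∩ Set.range (embed : (Fin d → ℤ) → (Fin d → ℝ))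


lemma embed_injective : Function.Injective (embed : (Fin d → ℤ) → (Fin d → ℝ)) := by
  intro x y h
  funext i
  have := congrFun h i
  simpa [embed] using this

lemma embed_add_sub (x y z : Fin d → ℤ) :
    embed (x + y - z) = embed x + embed y - embed z := by
  funext i
  simp only [embed, Pi.add_apply, Pi.sub_apply]
  push_cast
  ring

lemma ncard_inter_fiber (S : Submodule ℝ (Fin d → ℝ)) (F : Finset (Fin d → ℤ))
    (T : (Fin d → ℝ) ⧸ S)
    [DecidablePred fun x : Fin d → ℤ => (Submodule.Quotient.mk (embed x) : (Fin d → ℝ) ⧸ S) = T] :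
    (embed '' ↑F ∩ fiber S T).ncard
      = (F.filter (fun x => (Submodule.Quotient.mk (embed x) : (Fin d → ℝ) ⧸ S) = T)).card := by
  have hset : embed '' ↑F ∩ fiber S T
      = embed '' ↑(F.filter (fun x => (Submodule.Quotient.mk (embed x) : (Fin d → ℝ) ⧸ S) = T)) := by
    ext u
    simp only [Set.mem_inter_iff, Set.mem_image, Finset.mem_coe, Finset.mem_filter, fiber,
      Set.mem_setOf_eq]
    constructor
    · rintro ⟨⟨a, ha, rfl⟩, h2⟩; exact ⟨a, ⟨ha, h2⟩, rfl⟩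
    · rintro ⟨a, ⟨ha, h2⟩, rfl⟩; exact ⟨⟨a, ha, rfl⟩, h2⟩
  rw [hset, Set.ncard_image_of_injective _ embed_injective, Set.ncard_coe_finset]

lemma card_filter_switch {Xt Θ : Type*} [DecidableEq Xt] [DecidableEq Θ]
    (F : Finset Xt) (θ : Xt → Θ) (x y z w : Xt)
    (hx : x ∈ F) (hy : y ∈ F) (hz : z ∉ F) (hw : w ∉ F)
    (hxy : x ≠ y) (hzw : z ≠ w) (hθz : θ z = θ x) (hθw : θ w = θ y) (T : Θ) :
    ((((F.erase x).erase y) ∪ {z, w}).filter (fun a => θ a = T)).card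
      = (F.filter (fun a => θ a = T)).card := by
  have hzx : z ≠ x := fun h => hz (h ▸ hx)
  have hzy : z ≠ y := fun h => hz (h ▸ hy)
  have hwx : w ≠ x := fun h => hw (h ▸ hx)
  have hwy : w ≠ y := fun h => hw (h ▸ hy)
  have hmemF' : ∀ a, a ∈ ((F.erase x).erase y) ∪ {z, w}
      ↔ (a ∈ F ∧ a ≠ x ∧ a ≠ y) ∨ a = z ∨ a = w := by
    intro a
    simp only [Finset.mem_union, Finset.mem_erase, Finset.mem_insert, Finset.mem_singleton]
    tauto
  refine Finset.card_bij' (fun a _ => if a = z then x else if a = w then y else a)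
    (fun b _ => if b = x then z else if b = y then w else b) ?_ ?_ ?_ ?_
  · intro a ha
    rw [Finset.mem_filter] at ha ⊢
    obtain ⟨haF', haT⟩ := ha
    rcases (hmemF' a).mp haF' with ⟨h1, h2, h3⟩ | rfl | rfl
    · have haz : a ≠ z := fun h => hz (h ▸ h1)
      have haw : a ≠ w := fun h => hw (h ▸ h1)
      rw [if_neg haz, if_neg haw]
      exact ⟨h1, haT⟩
    · rw [if_pos rfl]
      exact ⟨hx, by rw [← hθz]; exact haT⟩
    · rw [if_neg hzw.symm, if_pos rfl]
      exact ⟨hy, by rw [← hθw]; exact haT⟩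
  · intro b hb
    rw [Finset.mem_filter] at hb ⊢
    obtain ⟨hbF, hbT⟩ := hb
    by_cases h1 : b = x
    · subst h1
      rw [if_pos rfl]
      exact ⟨(hmemF' z).mpr (Or.inr (Or.inl rfl)), by rw [hθz]; exact hbT⟩
    · rw [if_neg h1]
      by_cases h2 : b = y
      · subst h2
        rw [if_pos rfl]
        exact ⟨(hmemF' w).mpr (Or.inr (Or.inr rfl)), by rw [hθw]; exact hbT⟩
      · rw [if_neg h2]
        exact ⟨(hmemF' b).mpr (Or.inl ⟨hbF, h1, h2⟩), hbT⟩
  · intro a ha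
    rw [Finset.mem_filter] at ha
    rcases (hmemF' a).mp ha.1 with ⟨h1, h2, h3⟩ | rfl | rfl
    · have haz : a ≠ z := fun h => hz (h ▸ h1)
      have haw : a ≠ w := fun h => hw (h ▸ h1)
      rw [if_neg haz, if_neg haw, if_neg h2, if_neg h3]
    · rw [if_pos rfl, if_pos rfl]
    · rw [if_neg hzw.symm, if_pos rfl, if_neg hxy.symm, if_pos rfl]
  · intro b hb
    rw [Finset.mem_filter] at hb
    by_cases h1 : b = x
    · subst h1
      rw [if_pos rfl, if_pos rfl]
    · rw [if_neg h1]
      by_cases h2 : b = y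
      · subst h2
        rw [if_pos rfl, if_neg hzw.symm, if_pos rfl]
      · have hbz : b ≠ z := fun h => hz (h ▸ hb.1)
        have hbw : b ≠ w := fun h => hw (h ▸ hb.1)
        rw [if_neg h2, if_neg hbz, if_neg hbw]

lemma lattice_line_inf (S₁ S₂ : Submodule ℝ (Fin d → ℝ)) (h₁ : IsLatticeLine S₁)
    (h₂ : IsLatticeLine S₂) (hne : S₁ ≠ S₂) : S₁ ⊓ S₂ = ⊥ := by
  obtain ⟨v₁, hv₁, hS₁⟩ := h₁
  obtain ⟨v₂, hv₂, hS₂⟩ := h₂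
  rw [Submodule.eq_bot_iff]
  intro u hu
  by_contra hu0
  obtain ⟨hu1, hu2⟩ := Submodule.mem_inf.mp hu
  rw [hS₁] at hu1
  rw [hS₂] at hu2
  obtain ⟨c₁, hc₁⟩ := Submodule.mem_span_singleton.mp hu1
  obtain ⟨c₂, hc₂⟩ := Submodule.mem_span_singleton.mp hu2
  have hc₁0 : c₁ ≠ 0 := by rintro rfl; rw [zero_smul] at hc₁; exact hu0 hc₁.symm
  have hc₂0 : c₂ ≠ 0 := by rintro rfl; rw [zero_smul] at hc₂; exact hu0 hc₂.symm
  apply hne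
  rw [hS₁, hS₂]
  have e₁ := Submodule.span_singleton_smul_eq (R := ℝ) (isUnit_iff_ne_zero.mpr hc₁0)
    (fun i => (v₁ i : ℝ))
  have e₂ := Submodule.span_singleton_smul_eq (R := ℝ) (isUnit_iff_ne_zero.mpr hc₂0)
    (fun i => (v₂ i : ℝ))
  rw [hc₁] at e₁
  rw [hc₂] at e₂
  rw [← e₁, ← e₂]

lemma quot_inj (S₁ S₂ : Submodule ℝ (Fin d → ℝ)) (hinf : S₁ ⊓ S₂ = ⊥) (a b : Fin d → ℤ)
    (h1 : (Submodule.Quotient.mk (embed a) : (Fin d → ℝ) ⧸ S₁) = Submodule.Quotient.mk (embed b))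
    (h2 : (Submodule.Quotient.mk (embed a) : (Fin d → ℝ) ⧸ S₂) = Submodule.Quotient.mk (embed b)) :
    a = b := by
  rw [Submodule.Quotient.eq] at h1 h2
  have hm : embed a - embed b ∈ S₁ ⊓ S₂ := Submodule.mem_inf.mpr ⟨h1, h2⟩
  rw [hinf, Submodule.mem_bot, sub_eq_zero] at hm
  exact embed_injective hm

lemma mk_switch (S : Submodule ℝ (Fin d → ℝ)) (x y z : Fin d → ℤ)
    (h : (Submodule.Quotient.mk (embed z) : (Fin d → ℝ) ⧸ S) = Submodule.Quotient.mk (embed x)) :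
    (Submodule.Quotient.mk (embed (x + y - z)) : (Fin d → ℝ) ⧸ S)
      = Submodule.Quotient.mk (embed y) := by
  rw [embed_add_sub, Submodule.Quotient.mk_sub, Submodule.Quotient.mk_add, ← h]
  abel

lemma no_switch (S₁ S₂ : Submodule ℝ (Fin 2 → ℝ)) (hinf : S₁ ⊓ S₂ = ⊥)
    (F₁ : Finset (Fin 2 → ℤ))
    (huniq : ∀ F' : Finset (Fin 2 → ℤ),
      XrayEq S₁ (embed '' ↑F') (embed '' ↑F₁) →
      XrayEq S₂ (embed '' ↑F') (embed '' ↑F₁) → F' = F₁) :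
    ∀ x ∈ F₁, ∀ y ∈ F₁, ∀ z : Fin 2 → ℤ, z ∉ F₁ →
      (Submodule.Quotient.mk (embed z) : (Fin 2 → ℝ) ⧸ S₁) = Submodule.Quotient.mk (embed x) →
      (Submodule.Quotient.mk (embed z) : (Fin 2 → ℝ) ⧸ S₂) = Submodule.Quotient.mk (embed y) →
      ∃ w ∈ F₁, (Submodule.Quotient.mk (embed w) : (Fin 2 → ℝ) ⧸ S₁) = Submodule.Quotient.mk (embed y)
        ∧ (Submodule.Quotient.mk (embed w) : (Fin 2 → ℝ) ⧸ S₂) = Submodule.Quotient.mk (embed x) := by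
  classical
  intro x hx y hy z hz hρ hγ
  by_contra hno
  push_neg at hno
  set w : Fin 2 → ℤ := x + y - z with hwdef
  have hρw : (Submodule.Quotient.mk (embed w) : (Fin 2 → ℝ) ⧸ S₁) = Submodule.Quotient.mk (embed y) :=
    mk_switch S₁ x y z hρ
  have hγw : (Submodule.Quotient.mk (embed w) : (Fin 2 → ℝ) ⧸ S₂) = Submodule.Quotient.mk (embed x) := by
    have : w = y + x - z := by rw [hwdef]; ring
    rw [this]
    exact mk_switch S₂ y x z hγ
  have hwn : w ∉ F₁ := fun hmem => hno w hmem hρw hγw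
  have hxy : x ≠ y := by
    rintro rfl
    exact hz (quot_inj S₁ S₂ hinf z x hρ hγ ▸ hx)
  have hzw : z ≠ w := by
    intro h
    apply hxy
    apply quot_inj S₁ S₂ hinf x y
    · rw [← hρ, h, hρw]
    · rw [← hγw, ← h, hγ]
  set F' : Finset (Fin 2 → ℤ) := ((F₁.erase x).erase y) ∪ {z, w} with hF'
  have hX1 : XrayEq S₁ (embed '' ↑F') (embed '' ↑F₁) := by
    intro T
    rw [ncard_inter_fiber, ncard_inter_fiber]
    exact card_filter_switch F₁
      (fun a => (Submodule.Quotient.mk (embed a) : (Fin 2 → ℝ) ⧸ S₁)) x y z w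
      hx hy hz hwn hxy hzw hρ hρw T
  have hX2 : XrayEq S₂ (embed '' ↑F') (embed '' ↑F₁) := by
    intro T
    rw [ncard_inter_fiber, ncard_inter_fiber]
    have herase : ((F₁.erase x).erase y) = ((F₁.erase y).erase x) := Finset.erase_right_comm
    rw [hF', herase]
    exact card_filter_switch F₁
      (fun a => (Submodule.Quotient.mk (embed a) : (Fin 2 → ℝ) ⧸ S₂)) y x z w
      hy hx hz hwn hxy.symm hzw hγ hγw T
  have : F' = F₁ := huniq F' hX1 hX2
  apply hz
  rw [← this, hF']
  exact Finset.mem_union_right _ (Finset.mem_insert_self z {w})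

section Matching
variable {X K : Type*} [DecidableEq X] [DecidableEq K]

lemma exists_class_injection (P Q : Finset X) (c : X → K) (κ : K) :
    ∃ (D : Finset X) (g : X → X), D ⊆ P.filter (fun x => c x = κ) ∧
      Set.InjOn g ↑D ∧ (∀ a ∈ D, g a ∈ Q.filter (fun x => c x = κ)) ∧
      D.card = min (P.filter (fun x => c x = κ)).card (Q.filter (fun x => c x = κ)).card := by
  set Pk := P.filter (fun x => c x = κ) with hPk
  set Qk := Q.filter (fun x => c x = κ) with hQk
  obtain ⟨D, hDP, hDcard⟩ := Finset.exists_subset_card_eq (min_le_left Pk.card Qk.card)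
  obtain ⟨T, hTQ, hTcard⟩ := Finset.exists_subset_card_eq (min_le_right Pk.card Qk.card)
  have e := Finset.equivOfCardEq (hDcard.trans hTcard.symm)
  refine ⟨D, fun x => if h : x ∈ D then (e ⟨x, h⟩ : X) else x, hDP, ?_, ?_, hDcard⟩
  · intro a ha b hb hab
    simp only [Finset.mem_coe] at ha hb
    dsimp only at hab
    rw [dif_pos ha, dif_pos hb] at hab
    have := e.injective (Subtype.ext hab)
    exact Subtype.mk_eq_mk.mp this
  · intro a ha
    dsimp only
    rw [dif_pos ha]
    exact hTQ (e ⟨a, ha⟩).2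

lemma exists_matching (P Q : Finset X) (c : X → K) :
    ∃ (D : Finset X) (g : X → X), D ⊆ P ∧ Set.InjOn g ↑D ∧
      (∀ a ∈ D, g a ∈ Q ∧ c (g a) = c a) ∧
      ((P.card : ℤ) ≤ D.card + ∑ κ ∈ P.image c,
        max (((P.filter (fun x => c x = κ)).card : ℤ) - ((Q.filter (fun x => c x = κ)).card : ℤ)) 0) := by
  choose Df gf hDf hinjf hmapf hcardf using exists_class_injection P Q c
  refine ⟨P.filter (fun x => x ∈ Df (c x)), fun x => gf (c x) x, Finset.filter_subset _ _, ?_, ?_, ?_⟩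
  · intro a ha b hb hab
    dsimp only at hab
    simp only [Finset.coe_filter, Set.mem_setOf_eq] at ha hb
    have hca : c (gf (c a) a) = c a := by
      have := hmapf (c a) a ha.2
      exact (Finset.mem_filter.mp this).2
    have hcb : c (gf (c b) b) = c b := by
      have := hmapf (c b) b hb.2
      exact (Finset.mem_filter.mp this).2
    have hcc : c a = c b := by rw [← hca, ← hcb, hab]
    rw [hcc] at ha hab
    exact hinjf (c b) ha.2 hb.2 hab
  · intro a ha
    simp only [Finset.mem_filter] at ha
    have := hmapf (c a) a ha.2
    rw [Finset.mem_filter] at this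
    exact ⟨this.1, this.2⟩
  · -- cardinality
    set D := P.filter (fun x => x ∈ Df (c x)) with hD
    have hfib : ∀ κ ∈ P.image c, (D.filter (fun x => c x = κ)) = Df κ := by
      intro κ _
      ext x
      simp only [hD, Finset.mem_filter, and_assoc]
      constructor
      · rintro ⟨hxP, hxD, hxc⟩; rwa [hxc] at hxD
      · intro hx
        have := hDf κ hx
        rw [Finset.mem_filter] at this
        exact ⟨this.1, by rw [this.2]; exact hx, this.2⟩
    have hDcard : D.card = ∑ κ ∈ P.image c, (Df κ).card := by
      rw [Finset.card_eq_sum_card_fiberwise (f := c) (t := P.image c)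
        (fun x hx => Finset.mem_image_of_mem c (Finset.filter_subset _ _ hx))]
      exact Finset.sum_congr rfl fun κ hκ => by rw [hfib κ hκ]
    have hPcard : P.card = ∑ κ ∈ P.image c, (P.filter (fun x => c x = κ)).card :=
      Finset.card_eq_sum_card_fiberwise (fun x hx => Finset.mem_image_of_mem c hx)
    rw [hDcard, hPcard]
    push_cast
    rw [← Finset.sum_add_distrib]
    apply Finset.sum_le_sum
    intro κ hκ
    rw [hcardf κ]
    push_cast
    rcases le_total ((P.filter (fun x => c x = κ)).card : ℤ) ((Q.filter (fun x => c x = κ)).card : ℤ) with h | h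
    · rw [min_eq_left (by exact_mod_cast h), max_eq_right (by linarith)]; linarith
    · rw [min_eq_right (by exact_mod_cast h), max_eq_left (by linarith)]; linarith

end Matching

section Core
variable {X I J : Type*} [DecidableEq X] [DecidableEq I] [DecidableEq J]

lemma two_mul_max (x : ℤ) : 2 * max x 0 = |x| + x := by
  rcases le_or_gt 0 x with h | h
  · rw [max_eq_left h, abs_of_nonneg h]; ring
  · rw [max_eq_right h.le, abs_of_neg h]; ring

lemma count_diff {K : Type*} [DecidableEq K] (G H : Finset X) (c : X → K) (κ : K) :
    ((G.filter (fun x => c x = κ)).card : ℤ) - ((H.filter (fun x => c x = κ)).card : ℤ)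
      = (((G \ H).filter (fun x => c x = κ)).card : ℤ)
        - (((H \ G).filter (fun x => c x = κ)).card : ℤ) := by
  have hG : (G.filter (fun x => c x = κ)).card
      = ((G \ H).filter (fun x => c x = κ)).card + ((G ∩ H).filter (fun x => c x = κ)).card := by
    rw [← Finset.card_union_of_disjoint, ← Finset.filter_union, Finset.sdiff_union_inter]
    exact Finset.disjoint_filter_filter (Finset.disjoint_sdiff_inter G H)
  have hH : (H.filter (fun x => c x = κ)).card
      = ((H \ G).filter (fun x => c x = κ)).card + ((H ∩ G).filter (fun x => c x = κ)).card := by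
    rw [← Finset.card_union_of_disjoint, ← Finset.filter_union, Finset.sdiff_union_inter]
    exact Finset.disjoint_filter_filter (Finset.disjoint_sdiff_inter H G)
  rw [Finset.inter_comm H G] at hH
  rw [hG, hH]
  push_cast
  ring

lemma stability_core (ρ : X → I) (γ : X → J)
    (hinj : ∀ x y : X, ρ x = ρ y → γ x = γ y → x = y)
    (G H : Finset X) (hcard : G.card = H.card)
    (hsw : ∀ x ∈ G, ∀ y ∈ G, ∀ z : X, z ∉ G → ρ z = ρ x → γ z = γ y →
      ∃ w ∈ G, ρ w = ρ y ∧ γ w = γ x)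
    (β : ℕ)
    (hβ : (β : ℤ) = ∑ i ∈ (G ∪ H).image ρ,
        |((G.filter (fun x => ρ x = i)).card : ℤ) - ((H.filter (fun x => ρ x = i)).card : ℤ)|
      + ∑ j ∈ (G ∪ H).image γ,
        |((G.filter (fun x => γ x = j)).card : ℤ) - ((H.filter (fun x => γ x = j)).card : ℤ)|) :
    2 * (G \ H).card ^ 2 ≤ β ^ 2 * G.card := by
  classical
  set A := G \ H with hA
  set B := H \ G with hB
  have hAG : A ⊆ G := Finset.sdiff_subset
  have hBH : B ⊆ H := Finset.sdiff_subset
  have hBnG : ∀ b ∈ B, b ∉ G := fun b hb => (Finset.mem_sdiff.mp hb).2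
  have hABcard : A.card = B.card := by
    rw [hA, hB]
    have h1 := Finset.card_sdiff_add_card_inter G H
    have h2 := Finset.card_sdiff_add_card_inter H G
    rw [Finset.inter_comm H G] at h2
    omega
  set k := A.card with hk
  obtain ⟨D₁, g₁, hD₁A, hinj₁, hmap₁, hcard₁⟩ := exists_matching A B γ
  obtain ⟨D₂, g₂, hD₂B, hinj₂, hmap₂, hcard₂⟩ := exists_matching B A ρ
  set D := D₁.filter (fun a => g₁ a ∈ D₂) with hD
  set g := fun a => g₂ (g₁ a) with hg
  set q := (A \ D).card with hq
  have hDA : D ⊆ A := fun a ha => hD₁A (Finset.mem_filter.mp ha).1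
  -- deficiency bound
  have hqbound : (q : ℤ) ≤ ((k : ℤ) - D₁.card) + ((k : ℤ) - D₂.card) := by
    have hsub : A \ D ⊆ (A \ D₁) ∪ (D₁.filter (fun a => g₁ a ∉ D₂)) := by
      intro a ha
      rw [Finset.mem_sdiff] at ha
      rw [Finset.mem_union, Finset.mem_sdiff, Finset.mem_filter]
      by_cases h1 : a ∈ D₁
      · right
        refine ⟨h1, fun h2 => ha.2 ?_⟩
        rw [hD, Finset.mem_filter]; exact ⟨h1, h2⟩
      · left; exact ⟨ha.1, h1⟩
    have h1 : (A \ D₁).card = k - D₁.card := Finset.card_sdiff_of_subset hD₁A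
    have h2 : (D₁.filter (fun a => g₁ a ∉ D₂)).card ≤ B.card - D₂.card := by
      have hle : (D₁.filter (fun a => g₁ a ∉ D₂)).card ≤ (B \ D₂).card := by
        apply Finset.card_le_card_of_injOn g₁
        · intro a ha
          rw [Finset.mem_coe, Finset.mem_filter] at ha
          rw [Finset.mem_coe, Finset.mem_sdiff]
          exact ⟨(hmap₁ a ha.1).1, ha.2⟩
        · exact Set.InjOn.mono (by intro a ha; exact (Finset.mem_filter.mp ha).1) hinj₁
      rwa [Finset.card_sdiff_of_subset hD₂B] at hle
    have h3 : q ≤ (A \ D₁).card + (D₁.filter (fun a => g₁ a ∉ D₂)).card :=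
      le_trans (Finset.card_le_card hsub) (Finset.card_union_le _ _)
    have hD₁k : D₁.card ≤ k := Finset.card_le_card hD₁A
    have hD₂k : D₂.card ≤ B.card := Finset.card_le_card hD₂B
    have h4 := hABcard
    omega
  -- 2 * q ≤ β
  have himA : A ⊆ G ∪ H := fun a ha => Finset.mem_union_left _ (hAG ha)
  have himB : B ⊆ G ∪ H := fun b hb => Finset.mem_union_right _ (hBH hb)
  have hfibAg : ∑ κ ∈ (G ∪ H).image γ, ((A.filter (fun x => γ x = κ)).card : ℤ) = (k : ℤ) := by
    have h := Finset.card_eq_sum_card_fiberwise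
      (fun (x : X) (hx : x ∈ A) => Finset.mem_image_of_mem γ (himA hx))
    rw [hk, h]
    exact (Nat.cast_sum _ _).symm
  have hfibBg : ∑ κ ∈ (G ∪ H).image γ, ((B.filter (fun x => γ x = κ)).card : ℤ) = (k : ℤ) := by
    have h := Finset.card_eq_sum_card_fiberwise
      (fun (x : X) (hx : x ∈ B) => Finset.mem_image_of_mem γ (himB hx))
    rw [hABcard, h]
    exact (Nat.cast_sum _ _).symm
  have hfibAr : ∑ κ ∈ (G ∪ H).image ρ, ((A.filter (fun x => ρ x = κ)).card : ℤ) = (k : ℤ) := by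
    have h := Finset.card_eq_sum_card_fiberwise
      (fun (x : X) (hx : x ∈ A) => Finset.mem_image_of_mem ρ (himA hx))
    rw [hk, h]
    exact (Nat.cast_sum _ _).symm
  have hfibBr : ∑ κ ∈ (G ∪ H).image ρ, ((B.filter (fun x => ρ x = κ)).card : ℤ) = (k : ℤ) := by
    have h := Finset.card_eq_sum_card_fiberwise
      (fun (x : X) (hx : x ∈ B) => Finset.mem_image_of_mem ρ (himB hx))
    rw [hABcard, h]
    exact (Nat.cast_sum _ _).symm
  have h2q : 2 * (q : ℤ) ≤ (β : ℤ) := by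
    have hcol : (k : ℤ) - D₁.card ≤ ∑ j ∈ (G ∪ H).image γ,
        max (((A.filter (fun x => γ x = j)).card : ℤ) - ((B.filter (fun x => γ x = j)).card : ℤ)) 0 := by
      refine le_trans (by linarith [hcard₁]) (Finset.sum_le_sum_of_subset_of_nonneg
        (Finset.image_subset_image himA) ?_)
      intro j _ _; exact le_max_right _ _
    have hrow : (k : ℤ) - D₂.card ≤ ∑ i ∈ (G ∪ H).image ρ,
        max (((B.filter (fun x => ρ x = i)).card : ℤ) - ((A.filter (fun x => ρ x = i)).card : ℤ)) 0 := by
      have : (B.card : ℤ) = (k : ℤ) := by exact_mod_cast hABcard.symm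
      refine le_trans (by linarith [hcard₂]) (Finset.sum_le_sum_of_subset_of_nonneg
        (Finset.image_subset_image himB) ?_)
      intro i _ _; exact le_max_right _ _
    have habsγ : 2 * ∑ j ∈ (G ∪ H).image γ,
        max (((A.filter (fun x => γ x = j)).card : ℤ) - ((B.filter (fun x => γ x = j)).card : ℤ)) 0
        = ∑ j ∈ (G ∪ H).image γ,
          |((G.filter (fun x => γ x = j)).card : ℤ) - ((H.filter (fun x => γ x = j)).card : ℤ)| := by
      rw [Finset.mul_sum]
      have : ∀ j ∈ (G ∪ H).image γ,
          2 * max (((A.filter (fun x => γ x = j)).card : ℤ) - ((B.filter (fun x => γ x = j)).card : ℤ)) 0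
          = |((G.filter (fun x => γ x = j)).card : ℤ) - ((H.filter (fun x => γ x = j)).card : ℤ)|
            + (((A.filter (fun x => γ x = j)).card : ℤ) - ((B.filter (fun x => γ x = j)).card : ℤ)) := by
        intro j _
        rw [two_mul_max, count_diff G H γ j]
      rw [Finset.sum_congr rfl this, Finset.sum_add_distrib, Finset.sum_sub_distrib,
        hfibAg, hfibBg]
      ring
    have habsρ : 2 * ∑ i ∈ (G ∪ H).image ρ,
        max (((B.filter (fun x => ρ x = i)).card : ℤ) - ((A.filter (fun x => ρ x = i)).card : ℤ)) 0
        = ∑ i ∈ (G ∪ H).image ρ,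
          |((G.filter (fun x => ρ x = i)).card : ℤ) - ((H.filter (fun x => ρ x = i)).card : ℤ)| := by
      rw [Finset.mul_sum]
      have : ∀ i ∈ (G ∪ H).image ρ,
          2 * max (((B.filter (fun x => ρ x = i)).card : ℤ) - ((A.filter (fun x => ρ x = i)).card : ℤ)) 0
          = |((G.filter (fun x => ρ x = i)).card : ℤ) - ((H.filter (fun x => ρ x = i)).card : ℤ)|
            + (((B.filter (fun x => ρ x = i)).card : ℤ) - ((A.filter (fun x => ρ x = i)).card : ℤ)) := by
        intro i _
        rw [two_mul_max, ← abs_sub_comm, count_diff G H ρ i]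
      rw [Finset.sum_congr rfl this, Finset.sum_add_distrib, Finset.sum_sub_distrib,
        hfibAr, hfibBr]
      ring
    rw [hβ]
    linarith [hqbound, hcol, hrow]
  -- the row-size function
  set r : I → ℕ := fun i => (G.filter (fun x => ρ x = i)).card with hr
  have hginj : Set.InjOn g ↑D := by
    intro a ha b hb hab
    simp only [Finset.mem_coe, hD, Finset.mem_filter] at ha hb
    have h1 : g₁ a = g₁ b := hinj₂ (Finset.mem_coe.mpr ha.2) (Finset.mem_coe.mpr hb.2) hab
    exact hinj₁ (Finset.mem_coe.mpr ha.1) (Finset.mem_coe.mpr hb.1) h1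
  have hdec : ∀ a ∈ D, g a ∈ A ∧ r (ρ (g a)) < r (ρ a) := by
    intro a ha
    obtain ⟨haD₁, hg₁D₂⟩ := Finset.mem_filter.mp ha
    have haA : a ∈ A := hD₁A haD₁
    obtain ⟨hbB, hbγ⟩ := hmap₁ a haD₁
    obtain ⟨ha'A, ha'ρ⟩ := hmap₂ (g₁ a) hg₁D₂
    refine ⟨ha'A, ?_⟩
    have hRcard : ∀ i : I, r i = ((G.filter (fun x => ρ x = i)).image γ).card := by
      intro i
      rw [Finset.card_image_of_injOn]
      intro x hx y hy hxy
      simp only [Finset.coe_filter, Set.mem_setOf_eq] at hx hy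
      exact hinj x y (hx.2.trans hy.2.symm) hxy
    rw [hRcard, hRcard]
    apply Finset.card_lt_card
    rw [Finset.ssubset_iff_of_subset]
    · refine ⟨γ a, ?_, ?_⟩
      · apply Finset.mem_image_of_mem
        rw [Finset.mem_filter]
        exact ⟨hAG haA, rfl⟩
      · intro hmem
        rw [Finset.mem_image] at hmem
        obtain ⟨w', hw', hw'γ⟩ := hmem
        rw [Finset.mem_filter] at hw'
        have : w' = g₁ a := by
          apply hinj
          · rw [hw'.2, ha'ρ]
          · rw [hw'γ, ← hbγ]
        exact hBnG _ hbB (this ▸ hw'.1)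
    · intro j₀ hj₀
      rw [Finset.mem_image] at hj₀
      obtain ⟨w', hw', hw'γ⟩ := hj₀
      rw [Finset.mem_filter] at hw'
      obtain ⟨w, hwG, hwρ, hwγ⟩ := hsw w' hw'.1 a (hAG haA) (g₁ a) (hBnG _ hbB)
        (by rw [hw'.2, ha'ρ]) hbγ
      rw [Finset.mem_image]
      exact ⟨w, Finset.mem_filter.mpr ⟨hwG, hwρ⟩, by rw [hwγ, hw'γ]⟩
  -- the counting function N
  set N : ℕ → ℕ := fun t => (A.filter (fun a => r (ρ a) ≤ t)).card with hN
  have hrpos : ∀ a ∈ A, 1 ≤ r (ρ a) := by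
    intro a ha
    rw [hr]
    apply Finset.card_pos.mpr
    exact ⟨a, Finset.mem_filter.mpr ⟨hAG ha, rfl⟩⟩
  have hN0 : N 0 = 0 := by
    rw [hN]
    simp only [Finset.card_eq_zero]
    rw [Finset.filter_eq_empty_iff]
    intro a ha
    have := hrpos a ha
    omega
  have hNstep : ∀ t : ℕ, N (t + 1) ≤ N t + q := by
    intro t
    have hsub : A.filter (fun a => r (ρ a) ≤ t + 1)
        ⊆ (D.filter (fun a => r (ρ a) ≤ t + 1)) ∪ (A \ D) := by
      intro a ha
      rw [Finset.mem_filter] at ha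
      rw [Finset.mem_union, Finset.mem_filter, Finset.mem_sdiff]
      by_cases hD' : a ∈ D
      · left; exact ⟨hD', ha.2⟩
      · right; exact ⟨ha.1, hD'⟩
    have hmapg : (D.filter (fun a => r (ρ a) ≤ t + 1)).card ≤ N t := by
      apply Finset.card_le_card_of_injOn g
      · intro a ha
        rw [Finset.mem_coe, Finset.mem_filter] at ha
        obtain ⟨hgA, hglt⟩ := hdec a ha.1
        rw [Finset.mem_coe, Finset.mem_filter]
        exact ⟨hgA, by omega⟩
      · refine Set.InjOn.mono ?_ hginj
        intro a ha
        exact Finset.mem_coe.mpr (Finset.filter_subset _ _ (Finset.mem_coe.mp ha))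
    calc N (t + 1) ≤ (D.filter (fun a => r (ρ a) ≤ t + 1)).card + (A \ D).card :=
          le_trans (Finset.card_le_card hsub) (Finset.card_union_le _ _)
      _ ≤ N t + q := by rw [hq]; omega
  have hNlin : ∀ t : ℕ, N t ≤ q * t := by
    intro t
    induction t with
    | zero => simp [hN0]
    | succ t ih =>
      calc N (t + 1) ≤ N t + q := hNstep t
        _ ≤ q * t + q := by omega
        _ = q * (t + 1) := (Nat.mul_succ q t).symm
  -- each row fiber of A has at most q elements
  have hrowbound : ∀ i : I, (A.filter (fun a => ρ a = i)).card ≤ q := by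
    intro i
    rcases Finset.eq_empty_or_nonempty (A.filter (fun a => ρ a = i)) with he | ⟨a₀, ha₀⟩
    · rw [he]; simp
    · rw [Finset.mem_filter] at ha₀
      have hri : 1 ≤ r i := by
        have := hrpos a₀ ha₀.1
        rwa [ha₀.2] at this
      have hdisj : Disjoint (A.filter (fun a => ρ a = i))
          (A.filter (fun a => r (ρ a) ≤ r i - 1)) := by
        rw [Finset.disjoint_left]
        intro a h1 h2
        rw [Finset.mem_filter] at h1 h2
        rw [h1.2] at h2
        omega
      have hsub2 : (A.filter (fun a => ρ a = i)) ∪ (A.filter (fun a => r (ρ a) ≤ r i - 1))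
          ⊆ A.filter (fun a => r (ρ a) ≤ r i) := by
        intro a ha
        rw [Finset.mem_union, Finset.mem_filter, Finset.mem_filter] at ha
        rw [Finset.mem_filter]
        rcases ha with h | h
        · exact ⟨h.1, by rw [h.2]⟩
        · exact ⟨h.1, by omega⟩
      have hcards : (A.filter (fun a => ρ a = i)).card + N (r i - 1) ≤ N (r i) := by
        rw [hN]
        calc (A.filter (fun a => ρ a = i)).card + (A.filter (fun a => r (ρ a) ≤ r i - 1)).card
            = ((A.filter (fun a => ρ a = i)) ∪ (A.filter (fun a => r (ρ a) ≤ r i - 1))).card :=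
              (Finset.card_union_of_disjoint hdisj).symm
          _ ≤ _ := Finset.card_le_card hsub2
      have hstep := hNstep (r i - 1)
      have : r i - 1 + 1 = r i := by omega
      rw [this] at hstep
      omega
  -- the double counting sum
  set S := ∑ a ∈ A, N (r (ρ a)) with hS
  have hS1 : k ^ 2 ≤ 2 * S := by
    have hcf : ∀ a : X, N (r (ρ a)) = ∑ a' ∈ A, if r (ρ a') ≤ r (ρ a) then 1 else 0 := by
      intro a
      rw [hN]
      dsimp only
      rw [Finset.card_filter]
    have hSexp : S = ∑ a ∈ A, ∑ a' ∈ A, if r (ρ a') ≤ r (ρ a) then 1 else 0 :=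
      Finset.sum_congr rfl fun a _ => hcf a
    have hSswap : S = ∑ a ∈ A, ∑ a' ∈ A, if r (ρ a) ≤ r (ρ a') then 1 else 0 := by
      rw [hSexp, Finset.sum_comm]
    have h2S : 2 * S = ∑ a ∈ A, ∑ a' ∈ A,
        ((if r (ρ a') ≤ r (ρ a) then 1 else 0) + if r (ρ a) ≤ r (ρ a') then 1 else 0) := by
      rw [two_mul]
      nth_rewrite 1 [hSexp]
      rw [hSswap, ← Finset.sum_add_distrib]
      exact Finset.sum_congr rfl fun a _ => (Finset.sum_add_distrib).symm
    have hineq : ∑ a ∈ A, ∑ a' ∈ A, (1 : ℕ)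
        ≤ ∑ a ∈ A, ∑ a' ∈ A,
        ((if r (ρ a') ≤ r (ρ a) then 1 else 0) + if r (ρ a) ≤ r (ρ a') then 1 else 0) := by
      apply Finset.sum_le_sum
      intro a _
      apply Finset.sum_le_sum
      intro a' _
      rcases le_total (r (ρ a')) (r (ρ a)) with h | h
      · rw [if_pos h]; omega
      · rw [if_pos h]; omega
    simp only [Finset.sum_const, smul_eq_mul, mul_one] at hineq
    rw [h2S]
    calc k ^ 2 = k * k := sq k
      _ ≤ _ := hineq
  have hS2 : S ≤ q * ∑ a ∈ A, r (ρ a) := by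
    rw [hS, Finset.mul_sum]
    exact Finset.sum_le_sum fun a _ => hNlin (r (ρ a))
  have hS3 : ∑ a ∈ A, r (ρ a) ≤ q * G.card := by
    have hfib : ∑ a ∈ A, r (ρ a)
        = ∑ i ∈ (G ∪ H).image ρ, ∑ a ∈ A.filter (fun a => ρ a = i), r (ρ a) :=
      (Finset.sum_fiberwise_of_maps_to (fun x hx => Finset.mem_image_of_mem ρ (himA hx)) _).symm
    have hfib2 : ∀ i ∈ (G ∪ H).image ρ,
        ∑ a ∈ A.filter (fun a => ρ a = i), r (ρ a) = (A.filter (fun a => ρ a = i)).card * r i := by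
      intro i _
      rw [Finset.sum_congr rfl (fun a ha => by
        rw [(Finset.mem_filter.mp ha).2]), Finset.sum_const, smul_eq_mul]
    have hGsum : ∑ i ∈ (G ∪ H).image ρ, r i = G.card := by
      rw [hr]
      exact (Finset.card_eq_sum_card_fiberwise
        (fun x hx => Finset.mem_image_of_mem ρ (Finset.mem_union_left _ hx))).symm
    calc ∑ a ∈ A, r (ρ a) = ∑ i ∈ (G ∪ H).image ρ, (A.filter (fun a => ρ a = i)).card * r i := by
          rw [hfib]; exact Finset.sum_congr rfl hfib2
      _ ≤ ∑ i ∈ (G ∪ H).image ρ, q * r i :=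
          Finset.sum_le_sum fun i _ => Nat.mul_le_mul_right _ (hrowbound i)
      _ = q * G.card := by rw [← Finset.mul_sum, hGsum]
  -- put everything together
  have hfinal : k ^ 2 ≤ 2 * q ^ 2 * G.card := by
    calc k ^ 2 ≤ 2 * S := hS1
      _ ≤ 2 * (q * (q * G.card)) := by
          apply Nat.mul_le_mul_left
          exact le_trans hS2 (Nat.mul_le_mul_left _ hS3)
      _ = 2 * q ^ 2 * G.card := by ring
  have h2qb : 2 * q ≤ β := by exact_mod_cast h2q
  calc 2 * (G \ H).card ^ 2 = 2 * k ^ 2 := rfl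
    _ ≤ 2 * (2 * q ^ 2 * G.card) := Nat.mul_le_mul_left 2 hfinal
    _ = (2 * q) ^ 2 * G.card := by ring
    _ ≤ β ^ 2 * G.card := Nat.mul_le_mul_right _ (Nat.pow_le_pow_left h2qb 2)

end Core

lemma final_algebra (k m n β : ℕ) (hkm : k + m = n) (hcore : 2 * k ^ 2 ≤ β ^ 2 * n) :
    4 * (m:ℝ) + ((β:ℝ) + 2) * ((β:ℝ) - 1 + Real.sqrt (8 * (m:ℝ) + ((β:ℝ) - 1) ^ 2))
      ≥ 4 * (n:ℝ) := by
  have hcoreR : 2 * (k:ℝ)^2 ≤ (β:ℝ)^2 * n := by exact_mod_cast hcore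
  have hnR : (n:ℝ) = (k:ℝ) + m := by exact_mod_cast hkm.symm
  have hkR : (0:ℝ) ≤ k := Nat.cast_nonneg k
  have hmR : (0:ℝ) ≤ m := Nat.cast_nonneg m
  have hC : 2*(k:ℝ)^2 ≤ ((β:ℝ)+2)^2 * m + ((β:ℝ)+2)*((β:ℝ)-1)*(k:ℝ) := by
    by_cases hb0 : β = 0
    · subst hb0
      have h1 : (k:ℝ)^2 ≤ 0 := by push_cast at hcoreR; nlinarith [hcoreR]
      have hk0 : (k:ℝ) = 0 := sq_eq_zero_iff.mp (le_antisymm h1 (sq_nonneg _))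
      rw [hk0]
      push_cast
      nlinarith [hmR]
    · by_cases hb1 : β = 1
      · subst hb1
        push_cast at hcoreR ⊢
        rcases Nat.eq_zero_or_pos k with hk0 | hk1
        · rw [hk0]; push_cast; nlinarith [hmR]
        · have hk1R : (1:ℝ) ≤ k := by exact_mod_cast hk1
          nlinarith [hcoreR, hnR, hmR, mul_nonneg (by linarith : (0:ℝ) ≤ (k:ℝ) - 1) hkR]
      · have hb2 : 2 ≤ β := by omega
        have hb2R : (2:ℝ) ≤ β := by exact_mod_cast hb2
        nlinarith [hcoreR, hnR, hkR, hmR,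
          mul_nonneg hmR (by linarith : (0:ℝ) ≤ 4*(β:ℝ)+4),
          mul_nonneg hkR (by linarith : (0:ℝ) ≤ (β:ℝ)-2)]
  set s := Real.sqrt (8 * (m:ℝ) + ((β:ℝ) - 1)^2) with hsdef
  have hs0 : 0 ≤ s := Real.sqrt_nonneg _
  have hssq : s^2 = 8*(m:ℝ) + ((β:ℝ)-1)^2 := Real.sq_sqrt (by positivity)
  have h4k : 4*(k:ℝ) ≤ ((β:ℝ)+2)*((β:ℝ)-1) + ((β:ℝ)+2)*s := by
    by_cases hcase : 4*(k:ℝ) ≤ ((β:ℝ)+2)*((β:ℝ)-1)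
    · have hps : 0 ≤ ((β:ℝ)+2)*s := mul_nonneg (by positivity) hs0
      linarith
    · push_neg at hcase
      nlinarith [hC, hssq, hs0, hcase,
        mul_nonneg (by positivity : (0:ℝ) ≤ (β:ℝ)+2) hs0]
  rw [ge_iff_le]
  nlinarith [h4k, hnR]


section MainProof

lemma inner_xray (S : Submodule ℝ (Fin 2 → ℝ)) (F₁ F₂ : Finset (Fin 2 → ℤ))
    [DecidableEq ((Fin 2 → ℝ) ⧸ S)] :
    (∑ᶠ T : (Fin 2 → ℝ) ⧸ S, (((embed '' ↑F₁ ∩ fiber S T).ncard : ℤ)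
      - ((embed '' ↑F₂ ∩ fiber S T).ncard : ℤ)).natAbs)
    = ∑ T ∈ (F₁ ∪ F₂).image (fun x => (Submodule.Quotient.mk (embed x) : (Fin 2 → ℝ) ⧸ S)),
        (((F₁.filter (fun x => (Submodule.Quotient.mk (embed x) : (Fin 2 → ℝ) ⧸ S) = T)).card : ℤ)
          - ((F₂.filter (fun x => (Submodule.Quotient.mk (embed x) : (Fin 2 → ℝ) ⧸ S) = T)).card : ℤ)).natAbs := by
  classical
  have hsupp : Function.support (fun T : (Fin 2 → ℝ) ⧸ S =>
      (((embed '' ↑F₁ ∩ fiber S T).ncard : ℤ) - ((embed '' ↑F₂ ∩ fiber S T).ncard : ℤ)).natAbs)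
      ⊆ ↑((F₁ ∪ F₂).image (fun x => (Submodule.Quotient.mk (embed x) : (Fin 2 → ℝ) ⧸ S))) := by
    intro T hT
    rw [Function.mem_support] at hT
    rw [Finset.coe_image, Set.mem_image]
    by_contra hc
    push_neg at hc
    apply hT
    have h1 : ∀ F : Finset (Fin 2 → ℤ), F ⊆ F₁ ∪ F₂ → embed '' ↑F ∩ fiber S T = ∅ := by
      intro F hF
      rw [Set.eq_empty_iff_forall_notMem]
      rintro u ⟨⟨a, ha, rfl⟩, h2⟩
      exact hc a (Finset.mem_coe.mpr (hF (Finset.mem_coe.mp ha))) h2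
    rw [h1 F₁ Finset.subset_union_left, h1 F₂ Finset.subset_union_right]
    simp
  rw [finsum_eq_sum_of_support_subset _ hsupp]
  apply Finset.sum_congr rfl
  intro T _
  rw [ncard_inter_fiber, ncard_inter_fiber]

theorem van_dalen_stability
    (S₁ S₂ : Submodule ℝ (Fin 2 → ℝ)) (h₁ : IsLatticeLine S₁) (h₂ : IsLatticeLine S₂)
    (hne : S₁ ≠ S₂)
    (F₁ F₂ : Finset (Fin 2 → ℤ)) (hcard : F₁.card = F₂.card)
    (huniq : ∀ F' : Finset (Fin 2 → ℤ),
      XrayEq S₁ (embed '' ↑F') (embed '' ↑F₁) →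
      XrayEq S₂ (embed '' ↑F') (embed '' ↑F₁) → F' = F₁)
    (β : ℕ) (hβ : β = xrayDiff {S₁, S₂} (embed '' ↑F₁) (embed '' ↑F₂)) :
    4 * ((F₁ ∩ F₂).card : ℝ) +
      ((β : ℝ) + 2) * ((β : ℝ) - 1 +
        Real.sqrt (8 * ((F₁ ∩ F₂).card : ℝ) + ((β : ℝ) - 1) ^ 2)) ≥
      4 * (F₁.card : ℝ) := by
  classical
  have hinf := lattice_line_inf S₁ S₂ h₁ h₂ hne
  set ρ : (Fin 2 → ℤ) → ((Fin 2 → ℝ) ⧸ S₁) := fun x => Submodule.Quotient.mk (embed x) with hρdef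
  set γ : (Fin 2 → ℤ) → ((Fin 2 → ℝ) ⧸ S₂) := fun x => Submodule.Quotient.mk (embed x) with hγdef
  have hinj : ∀ x y : Fin 2 → ℤ, ρ x = ρ y → γ x = γ y → x = y :=
    fun a b hab1 hab2 => quot_inj S₁ S₂ hinf a b hab1 hab2
  have hsw : ∀ x ∈ F₁, ∀ y ∈ F₁, ∀ z : Fin 2 → ℤ, z ∉ F₁ → ρ z = ρ x → γ z = γ y →
      ∃ w ∈ F₁, ρ w = ρ y ∧ γ w = γ x := by
    intro x hx y hy z hz hz1 hz2
    exact no_switch S₁ S₂ hinf F₁ huniq x hx y hy z hz hz1 hz2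
  have hβint : (β : ℤ) = ∑ i ∈ (F₁ ∪ F₂).image ρ,
        |((F₁.filter (fun x => ρ x = i)).card : ℤ) - ((F₂.filter (fun x => ρ x = i)).card : ℤ)|
      + ∑ j ∈ (F₁ ∪ F₂).image γ,
        |((F₁.filter (fun x => γ x = j)).card : ℤ) - ((F₂.filter (fun x => γ x = j)).card : ℤ)| := by
    rw [hβ]
    have hpair := finsum_mem_pair (f := fun S : Submodule ℝ (Fin 2 → ℝ) =>
      ∑ᶠ T : (Fin 2 → ℝ) ⧸ S, (((embed '' (↑F₁ : Set (Fin 2 → ℤ)) ∩ fiber S T).ncard : ℤ)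
        - ((embed '' (↑F₂ : Set (Fin 2 → ℤ)) ∩ fiber S T).ncard : ℤ)).natAbs) hne
    rw [xrayDiff, hpair]
    rw [inner_xray S₁ F₁ F₂, inner_xray S₂ F₁ F₂]
    push_cast [Int.natCast_natAbs]
    rfl
  have hcore := stability_core ρ γ hinj F₁ F₂ hcard hsw β hβint
  have hkm := Finset.card_sdiff_add_card_inter F₁ F₂
  exact final_algebra ((F₁ \ F₂).card) ((F₁ ∩ F₂).card) (F₁.card) β hkm hcore

end MainProof
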